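/- Under the GNN perturbation setting: let H^{(l+1)} = ReLU(Ã H^{(l)} W^{(l)}) and H'^{(l+1)} = ReLU(Ã' H'^{(l)} W^{(l)}) with H^{(0)} = H'^{(0)} = X, ‖Ã‖_F ≤ A, ‖Ã − Ã'‖_F ≤ A·B, ‖W^{(l)}‖₂ ≤ L_W, and ‖H'^{(l)}‖₂ ≤ (A L_W)^l ‖X‖₂. Then for every k ≥ 0, ‖H^{(k)} − H'^{(k)}‖_F ≤ k·(A·L_W)^k·B·‖X‖₂. -/
import Mathlib

noncomputable def frobNorm {m n : ℕ} (M : Matrix (Fin m) (Fin n) ℝ) : ℝ :=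
  Real.sqrt (∑ i, ∑ j, (M i j) ^ 2)

noncomputable def specNorm {m n : ℕ} (M : Matrix (Fin m) (Fin n) ℝ) : ℝ :=
  ‖LinearMap.toContinuousLinearMap (Matrix.toEuclideanLin M)‖

section aux
open scoped Matrix.Norms.L2Operator
open Matrix

lemma specNorm_eq {m n : ℕ} (M : Matrix (Fin m) (Fin n) ℝ) : specNorm M = ‖M‖ := rfl

lemma specNorm_nonneg {m n : ℕ} (M : Matrix (Fin m) (Fin n) ℝ) : 0 ≤ specNorm M :=
  norm_nonneg _

lemma specNorm_transpose {m n : ℕ} (M : Matrix (Fin m) (Fin n) ℝ) :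
    specNorm Mᵀ = specNorm M := by
  have h : Mᵀ = Mᴴ := by ext i j; simp [Matrix.conjTranspose_apply]
  rw [specNorm_eq, specNorm_eq, h]
  exact Matrix.l2_opNorm_conjTranspose M

lemma specNorm_mul {m n p : ℕ} (M : Matrix (Fin m) (Fin n) ℝ) (N : Matrix (Fin n) (Fin p) ℝ) :
    specNorm (M * N) ≤ specNorm M * specNorm N := by
  simpa [specNorm_eq] using Matrix.l2_opNorm_mul M N

lemma spec_mulVec {m n : ℕ} (M : Matrix (Fin m) (Fin n) ℝ) (v : Fin n → ℝ) :
    Real.sqrt (∑ i, (M.mulVec v i) ^ 2) ≤ specNorm M * Real.sqrt (∑ j, (v j) ^ 2) := by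
  have h := Matrix.l2_opNorm_mulVec M ((WithLp.equiv 2 (Fin n → ℝ)).symm v)
  rw [← specNorm_eq] at h
  simpa [EuclideanSpace.norm_eq, Real.norm_eq_abs, sq_abs] using h

end aux

lemma frobNorm_nonneg {m n : ℕ} (M : Matrix (Fin m) (Fin n) ℝ) : 0 ≤ frobNorm M :=
  Real.sqrt_nonneg _

lemma frobNorm_zero {m n : ℕ} : frobNorm (0 : Matrix (Fin m) (Fin n) ℝ) = 0 := by
  simp [frobNorm]

-- squared bound from sqrt bound
lemma sq_bound {a c t : ℝ} (ha : 0 ≤ a) (hc : 0 ≤ c) (ht : 0 ≤ t)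
    (h : Real.sqrt a ≤ c * Real.sqrt t) : a ≤ c ^ 2 * t := by
  calc a = Real.sqrt a ^ 2 := (Real.sq_sqrt ha).symm
    _ ≤ (c * Real.sqrt t) ^ 2 := by
        apply pow_le_pow_left₀ (Real.sqrt_nonneg a) h
    _ = c ^ 2 * t := by rw [mul_pow, Real.sq_sqrt ht]

-- frob (M * N) ≤ frob M * spec N (row decomposition)
lemma frob_mul_spec {m n p : ℕ} (M : Matrix (Fin m) (Fin n) ℝ) (N : Matrix (Fin n) (Fin p) ℝ) :
    frobNorm (M * N) ≤ frobNorm M * specNorm N := by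
  have key : ∀ i, ∑ j, ((M * N) i j) ^ 2 ≤ specNorm N ^ 2 * ∑ k, (M i k) ^ 2 := by
    intro i
    have h := spec_mulVec N.transpose (fun k => M i k)
    have h2 := sq_bound (Finset.sum_nonneg fun j _ => sq_nonneg _)
      (specNorm_nonneg N.transpose) (Finset.sum_nonneg fun k _ => sq_nonneg _) (by simpa using h)
    rw [specNorm_transpose] at h2
    calc ∑ j, ((M * N) i j) ^ 2 = ∑ j, (N.transpose.mulVec (fun k => M i k) j) ^ 2 := by
          apply Finset.sum_congr rfl
          intro j _
          congr 1
          simp [Matrix.mul_apply, Matrix.mulVec, Matrix.transpose_apply, dotProduct,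
            mul_comm]
      _ ≤ specNorm N ^ 2 * ∑ k, (M i k) ^ 2 := h2
  have hsum : ∑ i, ∑ j, ((M * N) i j) ^ 2 ≤ specNorm N ^ 2 * ∑ i, ∑ k, (M i k) ^ 2 := by
    rw [Finset.mul_sum]
    exact Finset.sum_le_sum fun i _ => key i
  calc frobNorm (M * N) ≤ Real.sqrt (specNorm N ^ 2 * ∑ i, ∑ k, (M i k) ^ 2) :=
        Real.sqrt_le_sqrt hsum
    _ = frobNorm M * specNorm N := by
        rw [Real.sqrt_mul (sq_nonneg _), Real.sqrt_sq (specNorm_nonneg N)]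
        rw [frobNorm, mul_comm]

-- frob (M * N) ≤ frob M * frob N (Cauchy–Schwarz)
lemma frob_mul_frob {m n p : ℕ} (M : Matrix (Fin m) (Fin n) ℝ) (N : Matrix (Fin n) (Fin p) ℝ) :
    frobNorm (M * N) ≤ frobNorm M * frobNorm N := by
  have hsum : ∑ i, ∑ j, ((M * N) i j) ^ 2 ≤
      (∑ i, ∑ k, (M i k) ^ 2) * (∑ k, ∑ j, (N k j) ^ 2) := by
    have h1 : ∀ i j, ((M * N) i j) ^ 2 ≤ (∑ k, (M i k) ^ 2) * (∑ k, (N k j) ^ 2) := by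
      intro i j
      rw [Matrix.mul_apply]
      exact Finset.sum_mul_sq_le_sq_mul_sq _ _ _
    calc ∑ i, ∑ j, ((M * N) i j) ^ 2
        ≤ ∑ i, ∑ j, (∑ k, (M i k) ^ 2) * (∑ k, (N k j) ^ 2) :=
          Finset.sum_le_sum fun i _ => Finset.sum_le_sum fun j _ => h1 i j
      _ = (∑ i, ∑ k, (M i k) ^ 2) * (∑ k, ∑ j, (N k j) ^ 2) := by
          rw [Finset.sum_mul]
          apply Finset.sum_congr rfl
          intro i _
          rw [← Finset.mul_sum, Finset.sum_comm]
  calc frobNorm (M * N)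
      ≤ Real.sqrt ((∑ i, ∑ k, (M i k) ^ 2) * (∑ k, ∑ j, (N k j) ^ 2)) :=
        Real.sqrt_le_sqrt hsum
    _ = frobNorm M * frobNorm N := Real.sqrt_mul
        (Finset.sum_nonneg fun i _ => Finset.sum_nonneg fun k _ => sq_nonneg _) _

-- triangle inequality
lemma frob_add {m n : ℕ} (P Q : Matrix (Fin m) (Fin n) ℝ) :
    frobNorm (P + Q) ≤ frobNorm P + frobNorm Q := by
  have e : ∀ (R : Matrix (Fin m) (Fin n) ℝ),
      frobNorm R = ‖(WithLp.equiv 2 (Fin m × Fin n → ℝ)).symm (fun p => R p.1 p.2)‖ := by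
    intro R
    rw [EuclideanSpace.norm_eq]
    simp [frobNorm, Fintype.sum_prod_type, sq_abs]
  rw [e, e, e]
  have : (WithLp.equiv 2 (Fin m × Fin n → ℝ)).symm (fun p => (P + Q) p.1 p.2)
      = (WithLp.equiv 2 (Fin m × Fin n → ℝ)).symm (fun p => P p.1 p.2)
      + (WithLp.equiv 2 (Fin m × Fin n → ℝ)).symm (fun p => Q p.1 p.2) := by
    ext p; simp [Matrix.add_apply]
  rw [this]
  exact norm_add_le _ _

-- ReLU is 1-Lipschitz in Frobenius norm
lemma frob_relu {m n : ℕ} (P Q : Matrix (Fin m) (Fin n) ℝ) :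
    frobNorm (P.map (fun x => max x 0) - Q.map (fun x => max x 0)) ≤ frobNorm (P - Q) := by
  apply Real.sqrt_le_sqrt
  apply Finset.sum_le_sum
  intro i _
  apply Finset.sum_le_sum
  intro j _
  simp only [Matrix.sub_apply, Matrix.map_apply]
  have h := abs_max_sub_max_le_abs (P i j) (Q i j) 0
  calc (max (P i j) 0 - max (Q i j) 0) ^ 2 = |max (P i j) 0 - max (Q i j) 0| ^ 2 := (sq_abs _).symm
    _ ≤ |P i j - Q i j| ^ 2 := by apply pow_le_pow_left₀ (abs_nonneg _) h
    _ = (P i j - Q i j) ^ 2 := sq_abs _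

/-- GNN output difference bound (Lemma 4). -/
theorem gnn_output_difference_bound {n d : ℕ}
    (Atil Atil' : Matrix (Fin n) (Fin n) ℝ)
    (W : ℕ → Matrix (Fin d) (Fin d) ℝ)
    (X : Matrix (Fin n) (Fin d) ℝ)
    (H H' : ℕ → Matrix (Fin n) (Fin d) ℝ)
    (A B LW : ℝ)
    (hH0 : H 0 = X) (hH'0 : H' 0 = X)
    (hrecH : ∀ l, H (l + 1) = (Atil * H l * W l).map (fun x => max x 0))
    (hrecH' : ∀ l, H' (l + 1) = (Atil' * H' l * W l).map (fun x => max x 0))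
    (hA : frobNorm Atil ≤ A)
    (hAdiff : frobNorm (Atil - Atil') ≤ A * B)
    (hW : ∀ l, specNorm (W l) ≤ LW)
    (hH' : ∀ l, specNorm (H' l) ≤ (A * LW) ^ l * specNorm X) :
    ∀ k, frobNorm (H k - H' k) ≤ k * (A * LW) ^ k * B * specNorm X := by
  intro k
  induction k with
  | zero =>
    rw [hH0, hH'0, sub_self]
    simp [frobNorm_zero]
  | succ l ih =>
    have hA0 : 0 ≤ A := le_trans (frobNorm_nonneg Atil) hA
    have hLW0 : 0 ≤ LW := le_trans (specNorm_nonneg (W 0)) (hW 0)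
    have hAB0 : 0 ≤ A * B := le_trans (frobNorm_nonneg _) hAdiff
    have hIHr : 0 ≤ (l : ℝ) * (A * LW) ^ l * B * specNorm X :=
      le_trans (frobNorm_nonneg _) ih
    have hdec : Atil * H l * W l - Atil' * H' l * W l
        = Atil * (H l - H' l) * W l + (Atil - Atil') * (H' l * W l) := by
      rw [Matrix.mul_sub, Matrix.sub_mul, Matrix.sub_mul, ← Matrix.mul_assoc,
        ← Matrix.mul_assoc]
      abel
    have t1 : frobNorm (Atil * (H l - H' l) * W l)
        ≤ (A * ((l : ℝ) * (A * LW) ^ l * B * specNorm X)) * LW :=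
      le_trans (frob_mul_spec _ _)
        (mul_le_mul
          (le_trans (frob_mul_frob _ _)
            (mul_le_mul hA ih (frobNorm_nonneg _) hA0))
          (hW l) (specNorm_nonneg _) (mul_nonneg hA0 hIHr))
    have t2 : frobNorm ((Atil - Atil') * (H' l * W l))
        ≤ (A * B) * (((A * LW) ^ l * specNorm X) * LW) :=
      le_trans (frob_mul_spec _ _)
        (mul_le_mul hAdiff
          (le_trans (specNorm_mul _ _)
            (mul_le_mul (hH' l) (hW l) (specNorm_nonneg _)
              (le_trans (specNorm_nonneg _) (hH' l))))
          (specNorm_nonneg _) hAB0)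
    rw [hrecH, hrecH']
    calc frobNorm ((Atil * H l * W l).map (fun x => max x 0)
          - (Atil' * H' l * W l).map (fun x => max x 0))
        ≤ frobNorm (Atil * H l * W l - Atil' * H' l * W l) := frob_relu _ _
      _ = frobNorm (Atil * (H l - H' l) * W l + (Atil - Atil') * (H' l * W l)) := by
          rw [hdec]
      _ ≤ frobNorm (Atil * (H l - H' l) * W l)
          + frobNorm ((Atil - Atil') * (H' l * W l)) := frob_add _ _
      _ ≤ (A * ((l : ℝ) * (A * LW) ^ l * B * specNorm X)) * LW
          + (A * B) * (((A * LW) ^ l * specNorm X) * LW) := add_le_add t1 t2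
      _ = ((l : ℕ) + 1 : ℕ) * (A * LW) ^ (l + 1) * B * specNorm X := by
          push_cast
          ring
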